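/- Egalitarian PoC of a star: for a star graph G with m vertices (one center connected to m−1 leaves) and n ≥ 2 agents with n ≤ m, the egalitarian price of connectivity equals m − n + 1. For the lower bound: in the instance where one agent values m − n + 1 leaves at 1/(m−n+1) each and each of the other n−1 agents values a distinct remaining vertex at 1, the unconstrained optimal egalitarian welfare is 1 while every connected allocation has egalitarian welfare at most 1/(m−n+1). -/

import Mathlib

def ConnB {V : Type*} (G : SimpleGraph V) (s : Finset V) : Prop :=
  s = ∅ ∨ (G.induce (s : Set V)).Connected

def IsAlloc {V : Type*} [Fintype V] [DecidableEq V] {n : ℕ} (A : Fin n → Finset V) : Prop :=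
  (∀ i j : Fin n, i ≠ j → Disjoint (A i) (A j)) ∧ Finset.univ.biUnion A = Finset.univ

/-- The star on `m` vertices: vertex `0` is the center, adjacent to all other vertices. -/
def starGraph (m : ℕ) : SimpleGraph (Fin m) where
  Adj x y := x ≠ y ∧ (x.val = 0 ∨ y.val = 0)
  symm := ⟨by rintro x y ⟨h1, h2⟩; exact ⟨h1.symm, h2.symm⟩⟩
  loopless := ⟨by rintro x ⟨h1, _⟩; exact h1 rfl⟩

lemma star_conn_of_center {m : ℕ} (c : Fin m) (hc0 : c.val = 0) (s : Finset (Fin m))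
    (hc : c ∈ s) : ((starGraph m).induce (s : Set (Fin m))).Connected := by
  haveI : Nonempty (s : Set (Fin m)) := ⟨⟨c, hc⟩⟩
  have key : ∀ x : (s : Set (Fin m)), ((starGraph m).induce (s : Set (Fin m))).Reachable x ⟨c, hc⟩ := by
    intro x
    by_cases hx : (x : Fin m) = c
    · have : x = ⟨c, hc⟩ := Subtype.ext (by exact hx)
      rw [this]
    · exact SimpleGraph.Adj.reachable (by exact ⟨hx, Or.inr hc0⟩)
  exact ⟨fun x y => (key x).trans (key y).symm⟩

lemma star_connB_of_card_le_one {m : ℕ} (s : Finset (Fin m)) (h : s.card ≤ 1) :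
    ConnB (starGraph m) s := by
  rcases s.eq_empty_or_nonempty with he | ⟨a, ha⟩
  · exact Or.inl he
  · haveI : Nonempty (s : Set (Fin m)) := ⟨⟨a, ha⟩⟩
    refine Or.inr ⟨fun x y => ?_⟩
    have : x = y := Subtype.ext (Finset.card_le_one.mp h _ (by exact_mod_cast x.2) _ (by exact_mod_cast y.2))
    rw [this]

lemma star_card_le_one_of_connB {m : ℕ} (c : Fin m) (hc0 : c.val = 0)
    (s : Finset (Fin m)) (h : ConnB (starGraph m) s) (h0 : c ∉ s) : s.card ≤ 1 := by
  by_contra hcard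
  push_neg at hcard
  obtain ⟨x, hx, y, hy, hxy⟩ := Finset.one_lt_card.mp hcard
  rcases h with he | hconn
  · simp [he] at hx
  have hr := hconn.preconnected ⟨x, hx⟩ ⟨y, hy⟩
  obtain ⟨w⟩ := hr
  cases w with
  | nil => exact hxy rfl
  | @cons _ b _ hadj _ =>
    obtain ⟨-, h2⟩ := hadj
    rcases h2 with h2 | h2
    · exact h0 (by rwa [show x = c from Fin.ext (h2.trans hc0.symm)] at hx)
    · exact h0 (by
        have hb := b.2
        rwa [show (b : Fin m) = c from Fin.ext (h2.trans hc0.symm)] at hb)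

lemma part1 (m n : ℕ) (hn : 2 ≤ n) (hnm : n ≤ m) :
    (∀ u : Fin n → Fin m → ℝ, (∀ i v, 0 ≤ u i v) → (∀ i, ∑ v, u i v = 1) →
      ∀ A : Fin n → Finset (Fin m), IsAlloc A → ∀ W : ℝ, (∀ i, W ≤ ∑ v ∈ A i, u i v) →
        ∃ B : Fin n → Finset (Fin m), IsAlloc B ∧ (∀ i, ConnB (starGraph m) (B i)) ∧
          ∀ i, W / ((m - n + 1 : ℕ) : ℝ) ≤ ∑ v ∈ B i, u i v) := by
  intro u hpos _ A hA W hW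
  set k : ℕ := m - n + 1 with hk
  have hm : 0 < m := by omega
  have hk1 : 1 ≤ k := by omega
  have hkR : (0:ℝ) < (k:ℝ) := by exact_mod_cast hk1
  set c : Fin m := ⟨0, hm⟩ with hc
  by_cases hWpos : W ≤ 0
  · -- trivial connected allocation: agent 0 gets everything
    set i0 : Fin n := ⟨0, by omega⟩ with hi0
    refine ⟨fun i => if i = i0 then Finset.univ else ∅, ⟨?_, ?_⟩, ?_, ?_⟩
    · intro i j hij
      by_cases h1 : i = i0 <;> by_cases h2 : j = i0 <;>
        simp [h1, h2, Finset.disjoint_empty_left, Finset.disjoint_empty_right]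
      exact absurd (h1.trans h2.symm) hij
    · apply Finset.eq_univ_of_forall
      intro v
      exact Finset.mem_biUnion.mpr ⟨i0, Finset.mem_univ _, by simp⟩
    · intro i
      by_cases h1 : i = i0
      · simp only [h1, if_pos rfl, ite_true]
        exact Or.inr (star_conn_of_center c rfl _ (Finset.mem_univ c))
      · simp only [if_neg h1]
        exact Or.inl rfl
    · intro i
      have h1 : W / (k:ℝ) ≤ 0 := div_nonpos_of_nonpos_of_nonneg hWpos hkR.le
      exact h1.trans (Finset.sum_nonneg fun v _ => hpos i v)
  · push_neg at hWpos
    have hne : ∀ i, (A i).Nonempty := by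
      intro i
      rcases (A i).eq_empty_or_nonempty with h | h
      · exfalso; have := hW i; rw [h, Finset.sum_empty] at this; linarith
      · exact h
    have hsum_card : ∑ i, (A i).card = m := by
      rw [← Finset.card_biUnion (fun i _ j _ h => hA.1 i j h), hA.2, Finset.card_univ,
        Fintype.card_fin]
    have hcard_le : ∀ i, (A i).card ≤ k := by
      intro i
      have h1 : ∑ j ∈ Finset.univ.erase i, 1 ≤ ∑ j ∈ Finset.univ.erase i, (A j).card :=
        Finset.sum_le_sum fun j _ => Finset.card_pos.mpr (hne j)
      have h2 : ∑ j ∈ Finset.univ.erase i, (A j).card + (A i).card = ∑ j, (A j).card :=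
        Finset.sum_erase_add _ _ (Finset.mem_univ i)
      have h3 : ∑ j ∈ Finset.univ.erase i, (1:ℕ) = n - 1 := by
        rw [Finset.sum_const, smul_eq_mul, mul_one, Finset.card_erase_of_mem (Finset.mem_univ i),
          Finset.card_univ, Fintype.card_fin]
      omega
    obtain ⟨i0, -, hi0⟩ := Finset.mem_biUnion.mp (by rw [hA.2]; exact Finset.mem_univ c)
    choose b hb hbest using fun j => Finset.exists_max_image (A j) (u j) (hne j)
    have hbkey : ∀ j, W / (k:ℝ) ≤ u j (b j) := by
      intro j
      rw [div_le_iff₀ hkR]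
      calc W ≤ ∑ v ∈ A j, u j v := hW j
        _ ≤ (A j).card • u j (b j) := Finset.sum_le_card_nsmul _ _ _ (hbest j)
        _ = ((A j).card : ℝ) * u j (b j) := nsmul_eq_mul _ _
        _ ≤ (k:ℝ) * u j (b j) := by
            apply mul_le_mul_of_nonneg_right _ (hpos j (b j))
            exact_mod_cast hcard_le j
        _ = u j (b j) * (k:ℝ) := mul_comm _ _
    have hbinj : ∀ j j', b j = b j' → j = j' := by
      intro j j' h
      by_contra hjj
      exact Finset.disjoint_left.mp (hA.1 j j' hjj) (hb j) (h ▸ hb j')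
    set T : Finset (Fin m) := (Finset.univ.erase i0).image b with hT
    have hcT : c ∉ T := by
      intro hcmem
      obtain ⟨j, hj, hjc⟩ := Finset.mem_image.mp hcmem
      have hji0 : j ≠ i0 := (Finset.mem_erase.mp hj).1
      exact Finset.disjoint_left.mp (hA.1 j i0 hji0) (hjc ▸ hb j) hi0
    have hAT : ∀ v ∈ A i0, v ∉ T := by
      intro v hv hvmem
      obtain ⟨j, hj, hjv⟩ := Finset.mem_image.mp hvmem
      have hji0 : j ≠ i0 := (Finset.mem_erase.mp hj).1
      exact Finset.disjoint_left.mp (hA.1 j i0 hji0) (hjv ▸ hb j) hv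
    refine ⟨fun j => if j = i0 then Finset.univ \ T else {b j}, ⟨?_, ?_⟩, ?_, ?_⟩
    · intro i j hij
      by_cases h1 : i = i0 <;> by_cases h2 : j = i0
      · exact absurd (h1.trans h2.symm) hij
      · simp only [h1, if_pos rfl, ite_true, if_neg h2]
        rw [Finset.disjoint_singleton_right, Finset.mem_sdiff]
        rintro ⟨-, hnot⟩
        exact hnot (Finset.mem_image.mpr ⟨j, Finset.mem_erase.mpr ⟨h2, Finset.mem_univ _⟩, rfl⟩)
      · simp only [h2, if_pos rfl, ite_true, if_neg h1]
        rw [Finset.disjoint_singleton_left, Finset.mem_sdiff]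
        rintro ⟨-, hnot⟩
        exact hnot (Finset.mem_image.mpr ⟨i, Finset.mem_erase.mpr ⟨h1, Finset.mem_univ _⟩, rfl⟩)
      · simp only [if_neg h1, if_neg h2, Finset.disjoint_singleton_left,
          Finset.mem_singleton]
        exact fun h => hij (hbinj _ _ h)
    · apply Finset.eq_univ_of_forall
      intro v
      by_cases hv : v ∈ T
      · obtain ⟨j, hj, hjv⟩ := Finset.mem_image.mp hv
        have hji0 : j ≠ i0 := (Finset.mem_erase.mp hj).1
        exact Finset.mem_biUnion.mpr ⟨j, Finset.mem_univ _, by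
          simp only [if_neg hji0, Finset.mem_singleton]; exact hjv.symm⟩
      · exact Finset.mem_biUnion.mpr ⟨i0, Finset.mem_univ _, by
          simp only [if_pos rfl, ite_true]; exact Finset.mem_sdiff.mpr ⟨Finset.mem_univ _, hv⟩⟩
    · intro i
      by_cases h1 : i = i0
      · simp only [h1, if_pos rfl, ite_true]
        exact Or.inr (star_conn_of_center c rfl _
          (Finset.mem_sdiff.mpr ⟨Finset.mem_univ _, hcT⟩))
      · simp only [if_neg h1]
        exact star_connB_of_card_le_one _ (by simp)
    · intro i
      by_cases h1 : i = i0
      · simp only [h1, if_pos rfl, ite_true]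
        have hsub : A i0 ⊆ Finset.univ \ T := fun v hv =>
          Finset.mem_sdiff.mpr ⟨Finset.mem_univ _, hAT v hv⟩
        have h2 : ∑ v ∈ A i0, u i0 v ≤ ∑ v ∈ Finset.univ \ T, u i0 v :=
          Finset.sum_le_sum_of_subset_of_nonneg hsub fun v _ _ => hpos i0 v
        have h3 : W / (k:ℝ) ≤ W := div_le_self hWpos.le (by exact_mod_cast hk1)
        linarith [hW i0]
      · simp only [if_neg h1, Finset.sum_singleton]
        exact hbkey i

lemma part2 (m n : ℕ) (hn : 2 ≤ n) (hnm : n ≤ m) :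
    (∃ u : Fin n → Fin m → ℝ, (∀ i v, 0 ≤ u i v) ∧ (∀ i, ∑ v, u i v = 1) ∧
      (∃ A : Fin n → Finset (Fin m), IsAlloc A ∧ ∀ i, ∑ v ∈ A i, u i v = 1) ∧
      (∀ B : Fin n → Finset (Fin m), IsAlloc B → (∀ i, ConnB (starGraph m) (B i)) →
        ∃ i, ∑ v ∈ B i, u i v ≤ 1 / ((m - n + 1 : ℕ) : ℝ))) := by
  set k : ℕ := m - n + 1 with hk
  have hm : 0 < m := by omega
  have hk1 : 1 ≤ k := by omega
  have hkm : k ≤ m - 1 := by omega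
  have hkR : (0:ℝ) < (k:ℝ) := by exact_mod_cast hk1
  set c : Fin m := ⟨0, hm⟩ with hc
  have hcval : (c : Fin m).val = 0 := rfl
  classical
  set P : Fin n → Fin m → Prop := fun i v =>
    (i.val = 0 ∧ 1 ≤ v.val ∧ v.val ≤ k) ∨ (i.val = 1 ∧ v.val = 0) ∨
      (2 ≤ i.val ∧ v.val + 1 = k + i.val) with hP
  set u : Fin n → Fin m → ℝ := fun i v =>
    if P i v then (if i.val = 0 then (k:ℝ)⁻¹ else 1) else 0 with hu
  have hupos : ∀ i v, 0 ≤ u i v := by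
    intro i v
    rw [hu]; dsimp only
    split_ifs
    · positivity
    · norm_num
    · exact le_refl 0
  have hnorm : ∀ i, ∑ v, u i v = 1 := by
    intro i
    by_cases hi0 : i.val = 0
    · -- i.val = 0
      set f : ℕ → ℝ := fun j => if 1 ≤ j ∧ j ≤ k then (k:ℝ)⁻¹ else 0 with hf
      have heq : ∀ v : Fin m, u i v = f v.val := by
        intro v
        rw [hu, hf]; dsimp only
        by_cases hPv : P i v
        · rw [if_pos hPv, if_pos hi0, if_pos (by rw [hP] at hPv; omega)]
        · rw [if_neg hPv, if_neg (by rw [hP] at hPv; omega)]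
      calc ∑ v, u i v = ∑ v : Fin m, f v.val := Finset.sum_congr rfl fun v _ => heq v
        _ = ∑ j ∈ Finset.range m, f j := Fin.sum_univ_eq_sum_range f m
        _ = ∑ j ∈ (Finset.range m).filter (fun j => 1 ≤ j ∧ j ≤ k), f j := by
            rw [Finset.sum_filter]
            refine Finset.sum_congr rfl fun j _ => ?_
            by_cases hj : 1 ≤ j ∧ j ≤ k
            · rw [if_pos hj]
            · rw [if_neg hj, hf]; dsimp only; rw [if_neg hj]
        _ = ∑ j ∈ Finset.Icc 1 k, f j := by
            congr 1
            ext j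
            simp only [Finset.mem_filter, Finset.mem_range, Finset.mem_Icc]
            omega
        _ = 1 := by
            have hfv : ∀ j ∈ Finset.Icc 1 k, f j = (k:ℝ)⁻¹ := by
              intro j hj
              rw [hf]; dsimp only
              rw [if_pos (Finset.mem_Icc.mp hj)]
            rw [Finset.sum_congr rfl hfv, Finset.sum_const, Nat.card_Icc, nsmul_eq_mul]
            have hcc : (k + 1 - 1 : ℕ) = k := by omega
            rw [hcc, mul_inv_cancel₀ hkR.ne']
    · by_cases hi1 : i.val = 1
      · have heq : ∀ v : Fin m, u i v = if v = c then 1 else 0 := by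
          intro v
          rw [hu]; dsimp only
          by_cases hPv : P i v
          · have hv0 : v.val = 0 := by rw [hP] at hPv; omega
            rw [if_pos hPv, if_neg (by omega), if_pos (Fin.ext hv0)]
          · have hvc : v ≠ c := by
              intro h
              apply hPv
              rw [hP]
              have hv0 : v.val = 0 := by rw [h]
              omega
            rw [if_neg hPv, if_neg hvc]
        rw [Finset.sum_congr rfl fun v _ => heq v,
          Finset.sum_ite_eq' Finset.univ c (fun _ => (1:ℝ)), if_pos (Finset.mem_univ c)]
      · have hi2 : 2 ≤ i.val := by omega
        have hlt : k + i.val - 1 < m := by have := i.2; omega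
        set t : Fin m := ⟨k + i.val - 1, hlt⟩ with ht
        have heq : ∀ v : Fin m, u i v = if v = t then 1 else 0 := by
          intro v
          rw [hu]; dsimp only
          by_cases hPv : P i v
          · have hvt : v.val = k + i.val - 1 := by rw [hP] at hPv; omega
            rw [if_pos hPv, if_neg (by omega), if_pos (Fin.ext hvt)]
          · have hvt : v ≠ t := by
              intro h
              apply hPv
              rw [hP]
              have hv0 : v.val = k + i.val - 1 := by rw [h]
              omega
            rw [if_neg hPv, if_neg hvt]
        rw [Finset.sum_congr rfl fun v _ => heq v,
          Finset.sum_ite_eq' Finset.univ t (fun _ => (1:ℝ)), if_pos (Finset.mem_univ t)]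

  refine ⟨u, hupos, hnorm, ⟨fun i => Finset.univ.filter (P i), ⟨?_, ?_⟩, ?_⟩, ?_⟩
  · -- disjoint
    intro i j hij
    rw [Finset.disjoint_left]
    intro v hvi hvj
    have hPi := (Finset.mem_filter.mp hvi).2
    have hPj := (Finset.mem_filter.mp hvj).2
    rw [hP] at hPi hPj
    exact hij (Fin.ext (by omega))
  · -- cover
    apply Finset.eq_univ_of_forall
    intro v
    rcases Nat.lt_or_ge v.val 1 with hv | hv
    · refine Finset.mem_biUnion.mpr ⟨⟨1, by omega⟩, Finset.mem_univ _,
        Finset.mem_filter.mpr ⟨Finset.mem_univ _, ?_⟩⟩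
      rw [hP]
      have h1 : ((⟨1, by omega⟩ : Fin n) : ℕ) = 1 := rfl
      omega
    · rcases Nat.lt_or_ge k v.val with hv2 | hv2
      · have hvn : v.val - k + 1 < n := by have := v.2; omega
        refine Finset.mem_biUnion.mpr ⟨⟨v.val - k + 1, hvn⟩, Finset.mem_univ _,
          Finset.mem_filter.mpr ⟨Finset.mem_univ _, ?_⟩⟩
        rw [hP]
        have h1 : ((⟨v.val - k + 1, hvn⟩ : Fin n) : ℕ) = v.val - k + 1 := rfl
        omega
      · refine Finset.mem_biUnion.mpr ⟨⟨0, by omega⟩, Finset.mem_univ _,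
          Finset.mem_filter.mpr ⟨Finset.mem_univ _, ?_⟩⟩
        rw [hP]
        have h1 : ((⟨0, by omega⟩ : Fin n) : ℕ) = 0 := rfl
        omega
  · -- each agent gets 1
    intro i
    have hfe : ∑ v ∈ Finset.univ.filter (P i), u i v = ∑ v, u i v := by
      rw [Finset.sum_filter]
      apply Finset.sum_congr rfl
      intro v _
      by_cases hPv : P i v
      · rw [if_pos hPv]
      · rw [if_neg hPv, hu]; dsimp only; rw [if_neg hPv]
    rw [hfe, hnorm i]
  · -- connected bound
    intro B hB hconn
    set i0 : Fin n := ⟨0, by omega⟩ with hi0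
    set i1 : Fin n := ⟨1, by omega⟩ with hi1
    have hv0 : (i0 : ℕ) = 0 := rfl
    have hv1 : (i1 : ℕ) = 1 := rfl
    by_cases hc0 : c ∈ B i0
    · refine ⟨i1, ?_⟩
      have hzero : ∑ v ∈ B i1, u i1 v = 0 := by
        apply Finset.sum_eq_zero
        intro v hv
        have hvc : v ≠ c := by
          intro h
          have hd := hB.1 i0 i1 (by intro h'; have := congrArg Fin.val h'; omega)
          exact Finset.disjoint_left.mp hd hc0 (h ▸ hv)
        have hvz : v.val ≠ 0 := fun h => hvc (Fin.ext h)
        rw [hu]; dsimp only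
        rw [if_neg (by rw [hP]; omega)]
      rw [hzero]
      positivity
    · refine ⟨i0, ?_⟩
      have hcard : (B i0).card ≤ 1 :=
        star_card_le_one_of_connB c rfl (B i0) (hconn i0) hc0
      have hle : ∀ v ∈ B i0, u i0 v ≤ (k:ℝ)⁻¹ := by
        intro v _
        rw [hu]; dsimp only
        by_cases hPv : P i0 v
        · rw [if_pos hPv, if_pos hv0]
        · rw [if_neg hPv]; positivity
      calc ∑ v ∈ B i0, u i0 v ≤ (B i0).card • (k:ℝ)⁻¹ :=
            Finset.sum_le_card_nsmul _ _ _ hle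
        _ ≤ 1 • (k:ℝ)⁻¹ := nsmul_le_nsmul_left (by positivity) hcard
        _ = 1 / (k:ℝ) := by rw [one_smul, one_div]

/-- for a star on `m` vertices and `2 ≤ n ≤ m` agents with normalized utilities,
the egalitarian price of connectivity equals `m - n + 1`: (upper bound) any egalitarian welfare
`W` achievable by an allocation can be matched up to factor `1/(m-n+1)` by a connected
allocation; (lower bound) there is a normalized instance in which some allocation gives every
agent utility `1`, while every connected allocation gives some agent at most `1/(m-n+1)`. -/
theorem egal_poc_star (m n : ℕ) (hn : 2 ≤ n) (hnm : n ≤ m) :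
    (∀ u : Fin n → Fin m → ℝ, (∀ i v, 0 ≤ u i v) → (∀ i, ∑ v, u i v = 1) →
      ∀ A : Fin n → Finset (Fin m), IsAlloc A → ∀ W : ℝ, (∀ i, W ≤ ∑ v ∈ A i, u i v) →
        ∃ B : Fin n → Finset (Fin m), IsAlloc B ∧ (∀ i, ConnB (starGraph m) (B i)) ∧
          ∀ i, W / ((m - n + 1 : ℕ) : ℝ) ≤ ∑ v ∈ B i, u i v) ∧
    (∃ u : Fin n → Fin m → ℝ, (∀ i v, 0 ≤ u i v) ∧ (∀ i, ∑ v, u i v = 1) ∧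
      (∃ A : Fin n → Finset (Fin m), IsAlloc A ∧ ∀ i, ∑ v ∈ A i, u i v = 1) ∧
      (∀ B : Fin n → Finset (Fin m), IsAlloc B → (∀ i, ConnB (starGraph m) (B i)) →
        ∃ i, ∑ v ∈ B i, u i v ≤ 1 / ((m - n + 1 : ℕ) : ℝ))) := by
  exact ⟨part1 m n hn hnm, part2 m n hn hnm⟩
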